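/- For every integer n ≥ 2, there is a well-defined group homomorphism ρ : J_n → D_n ⋊ S_n determined by ρ(s_{p,q}) = (τ_{[p,q]}, w_{p,q}) for all 1 ≤ p < q ≤ n, and this homomorphism is injective. -/

import Mathlib

/-- The set of intervals `[p,q]`, `1 ≤ p < q ≤ n`, indexing the generators `s_{p,q}`
of the cactus group `J_n`. -/
def cactusSet (n : ℕ) : Set (ℕ × ℕ) := {pq | 1 ≤ pq.1 ∧ pq.1 < pq.2 ∧ pq.2 ≤ n}

/-- The defining relations (j1)-(j3) of the cactus group, restricted to a collection `C`
of generating intervals: exactly those cactus relations involving only generators from `C`. -/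
def cactusRels (C : Set (ℕ × ℕ)) : Set (FreeGroup C) :=
  {w | (∃ a : C, w = FreeGroup.of a * FreeGroup.of a) ∨
    (∃ a b : C, (a.1.2 < b.1.1 ∨ b.1.2 < a.1.1) ∧
      w = FreeGroup.of a * FreeGroup.of b * (FreeGroup.of a)⁻¹ * (FreeGroup.of b)⁻¹) ∨
    (∃ a b c : C, a.1.1 ≤ b.1.1 ∧ b.1.2 ≤ a.1.2 ∧
      c.1.1 = a.1.1 + a.1.2 - b.1.2 ∧ c.1.2 = a.1.1 + a.1.2 - b.1.1 ∧
      w = FreeGroup.of a * FreeGroup.of b * (FreeGroup.of a)⁻¹ * (FreeGroup.of c)⁻¹)}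

/-- The group presented by the generators `s_I`, `I ∈ C`, and those cactus relations
involving only these generators. -/
abbrev PartialCactusGroup (C : Set (ℕ × ℕ)) := PresentedGroup (cactusRels C)

/-- The cactus group `J_n`. -/
abbrev CactusGroup (n : ℕ) := PartialCactusGroup (cactusSet n)

/-- The involution of `{0,…,n-1}` underlying the permutation `w_{p,q}` (in `1`-based labelling:
the point `i` corresponds to the label `i+1 ∈ {1,…,n}`): it sends a label `i` with `p ≤ i ≤ q`
to `p + q - i` and fixes all other labels. -/
def wFun (n p q : ℕ) (i : Fin n) : Fin n :=
  if h : 1 ≤ p ∧ p ≤ (i : ℕ) + 1 ∧ (i : ℕ) + 1 ≤ q ∧ q ≤ n then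
    ⟨p + q - ((i : ℕ) + 1) - 1, by omega⟩
  else i

lemma wFun_involutive (n p q : ℕ) : Function.Involutive (wFun n p q) := by
  intro i
  unfold wFun
  by_cases h : 1 ≤ p ∧ p ≤ (i : ℕ) + 1 ∧ (i : ℕ) + 1 ≤ q ∧ q ≤ n
  · rw [dif_pos h, dif_pos (by simp only [Fin.val_mk]; omega)]
    apply Fin.ext
    simp only [Fin.val_mk]
    omega
  · rw [dif_neg h, dif_neg h]

/-- The permutation `w_{p,q}` of `{1,…,n}` (coded on `Fin n` via `i ↦ i+1`), sending `i` to
`p+q-i` for `p ≤ i ≤ q` and fixing all other points. -/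
def wPerm (n p q : ℕ) : Equiv.Perm (Fin n) :=
  Function.Involutive.toPerm (wFun n p q) (wFun_involutive n p q)

/-- The subset `{p, p+1, …, q}` of `{1,…,n}`, coded inside `Fin n` via `i ↦ i+1`. -/
def intervalFinset (n p q : ℕ) : Finset (Fin n) :=
  Finset.univ.filter (fun i => p ≤ (i : ℕ) + 1 ∧ (i : ℕ) + 1 ≤ q)

lemma two_le_intervalFinset_card {n p q : ℕ} (h : (p, q) ∈ cactusSet n) :
    2 ≤ (intervalFinset n p q).card := by
  obtain ⟨h1, h2, h3⟩ := h
  have hp : (⟨p - 1, by omega⟩ : Fin n) ∈ intervalFinset n p q := by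
    simp only [intervalFinset, Finset.mem_filter, Finset.mem_univ, true_and]
    omega
  have hq : (⟨q - 1, by omega⟩ : Fin n) ∈ intervalFinset n p q := by
    simp only [intervalFinset, Finset.mem_filter, Finset.mem_univ, true_and]
    omega
  have := Finset.one_lt_card.mpr ⟨_, hp, _, hq, by simp only [ne_eq, Fin.mk.injEq]; omega⟩
  omega

lemma intervalFinset_card {n p q : ℕ} (h1 : 1 ≤ p) (h3 : q ≤ n) :
    (intervalFinset n p q).card = q + 1 - p := by
  have himg : (intervalFinset n p q).image Fin.val = Finset.Ico (p - 1) q := by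
    ext x
    simp only [intervalFinset, Finset.mem_image, Finset.mem_filter, Finset.mem_univ, true_and,
      Finset.mem_Ico]
    constructor
    · rintro ⟨i, hi, rfl⟩
      omega
    · rintro ⟨hx1, hx2⟩
      exact ⟨⟨x, by omega⟩, by simp only [Fin.val_mk]; omega, rfl⟩
  have hcard : (intervalFinset n p q).card = (Finset.Ico (p - 1) q).card := by
    rw [← himg, Finset.card_image_of_injective _ Fin.val_injective]
  rw [hcard, Nat.card_Ico]
  omega

/-- Generators of the Gauss diagram group `D_n`: subsets of `{1,…,n}` of size at least `2`. -/
abbrev GaussGen (n : ℕ) := {I : Finset (Fin n) // 2 ≤ I.card}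

/-- The defining relations (d1)-(d2) of the Gauss diagram group `D_n`. -/
def gaussRels (n : ℕ) : Set (FreeGroup (GaussGen n)) :=
  {w | (∃ a : GaussGen n, w = FreeGroup.of a * FreeGroup.of a) ∨
    (∃ a b : GaussGen n, (Disjoint a.1 b.1 ∨ a.1 ⊆ b.1) ∧
      w = FreeGroup.of a * FreeGroup.of b * (FreeGroup.of a)⁻¹ * (FreeGroup.of b)⁻¹)}

/-- Mostovoy's Gauss diagram group `D_n`, a right-angled Coxeter group. -/
abbrev GaussGroup (n : ℕ) := PresentedGroup (gaussRels n)

lemma gaussRel_one {n : ℕ} {r : FreeGroup (GaussGen n)} (h : r ∈ gaussRels n) :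
    PresentedGroup.mk (gaussRels n) r = 1 :=
  (QuotientGroup.eq_one_iff _).mpr (Subgroup.subset_normalClosure h)

/-- The action of a permutation on the generators of `D_n`: `σ • τ_I = τ_{σ(I)}`. -/
def permGen (n : ℕ) (σ : Equiv.Perm (Fin n)) (a : GaussGen n) : GaussGen n :=
  ⟨a.1.image σ, by rw [Finset.card_image_of_injective _ σ.injective]; exact a.2⟩

lemma permGen_rels (n : ℕ) (σ : Equiv.Perm (Fin n)) : ∀ r ∈ gaussRels n,
    FreeGroup.lift (fun a => (PresentedGroup.of (rels := gaussRels n) (permGen n σ a))) r = 1 := by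
  rintro r (⟨a, rfl⟩ | ⟨a, b, hab, rfl⟩)
  · have h1 : (PresentedGroup.mk (gaussRels n))
        (FreeGroup.of (permGen n σ a) * FreeGroup.of (permGen n σ a)) = 1 :=
      gaussRel_one (Or.inl ⟨permGen n σ a, rfl⟩)
    rw [map_mul] at h1
    simpa [PresentedGroup.of] using h1
  · have hab' : Disjoint (permGen n σ a).1 (permGen n σ b).1 ∨
        (permGen n σ a).1 ⊆ (permGen n σ b).1 := by
      rcases hab with h | h
      · exact Or.inl ((Finset.disjoint_image σ.injective).mpr h)
      · exact Or.inr (Finset.image_subset_image h)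
    have h1 : (PresentedGroup.mk (gaussRels n))
        (FreeGroup.of (permGen n σ a) * FreeGroup.of (permGen n σ b) *
          (FreeGroup.of (permGen n σ a))⁻¹ * (FreeGroup.of (permGen n σ b))⁻¹) = 1 :=
      gaussRel_one (Or.inr ⟨permGen n σ a, permGen n σ b, hab', rfl⟩)
    rw [map_mul, map_mul, map_mul, map_inv, map_inv] at h1
    simpa [PresentedGroup.of] using h1

/-- The endomorphism of `D_n` induced by a permutation. -/
def permHom (n : ℕ) (σ : Equiv.Perm (Fin n)) : GaussGroup n →* GaussGroup n :=
  PresentedGroup.toGroup (permGen_rels n σ)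

lemma permHom_of (n : ℕ) (σ : Equiv.Perm (Fin n)) (a : GaussGen n) :
    permHom n σ (PresentedGroup.of a) = PresentedGroup.of (permGen n σ a) :=
  PresentedGroup.toGroup.of _

lemma permHom_comp (n : ℕ) (σ τ : Equiv.Perm (Fin n)) :
    (permHom n σ).comp (permHom n τ) = permHom n (σ * τ) := by
  ext x
  simp only [MonoidHom.comp_apply, permHom_of]
  congr 1
  apply Subtype.ext
  simp only [permGen, Finset.image_image]
  rfl

lemma permHom_one (n : ℕ) : permHom n 1 = MonoidHom.id (GaussGroup n) := by
  ext x
  simp only [MonoidHom.id_apply, permHom_of]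
  congr 1
  apply Subtype.ext
  simp [permGen]

lemma permHom_apply_apply (n : ℕ) (σ τ : Equiv.Perm (Fin n)) (x : GaussGroup n) :
    permHom n σ (permHom n τ x) = permHom n (σ * τ) x :=
  DFunLike.congr_fun (permHom_comp n σ τ) x

/-- The action of `S_n` on `D_n` by `σ • τ_I = τ_{σ(I)}`, as a homomorphism to automorphisms. -/
def permAut (n : ℕ) : Equiv.Perm (Fin n) →* MulAut (GaussGroup n) where
  toFun σ :=
    { toFun := permHom n σ
      invFun := permHom n σ⁻¹
      left_inv := fun x => by
        rw [permHom_apply_apply, inv_mul_cancel, permHom_one, MonoidHom.id_apply]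
      right_inv := fun x => by
        rw [permHom_apply_apply, mul_inv_cancel, permHom_one, MonoidHom.id_apply]
      map_mul' := map_mul _ }
  map_one' := by
    apply MulEquiv.ext
    intro x
    simp only [MulEquiv.coe_mk, Equiv.coe_fn_mk]
    rw [permHom_one]
    rfl
  map_mul' := fun σ τ => by
    apply MulEquiv.ext
    intro x
    simp only [MulEquiv.coe_mk, Equiv.coe_fn_mk, MulAut.mul_apply]
    exact (permHom_apply_apply n σ τ x).symm


namespace Racg
variable {V : Type*} {adj : V → V → Prop}

def Step (adj : V → V → Prop) (l l' : List V) : Prop :=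
  ∃ (u v : List V) (c d : V), adj c d ∧ l = u ++ c :: d :: v ∧ l' = u ++ d :: c :: v
abbrev Steps (adj : V → V → Prop) : List V → List V → Prop := Relation.ReflTransGen (Step adj)
def Exposed (adj : V → V → Prop) (a : V) (l : List V) : Prop :=
  ∃ u v, l = u ++ a :: v ∧ ∀ y ∈ u, adj a y
def Pattern (adj : V → V → Prop) (a : V) (l : List V) : Prop :=
  ∃ u w, l = u ++ a :: w ∧ Exposed adj a w

lemma occ_split : ∀ (U u : List V) (a c d : V) (W v : List V),
    U ++ a :: W = u ++ c :: d :: v →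
    (∃ w, u = U ++ a :: w ∧ W = w ++ c :: d :: v) ∨
    (U = u ∧ a = c ∧ W = d :: v) ∨
    (U = u ++ [c] ∧ a = d ∧ W = v) ∨
    (∃ w, U = u ++ c :: d :: w ∧ v = w ++ a :: W) := by
  intro U
  induction U with
  | nil =>
    intro u a c d W v h
    cases u with
    | nil =>
      simp only [List.nil_append, List.cons.injEq] at h
      exact Or.inr (Or.inl ⟨rfl, h.1, h.2⟩)
    | cons e u' =>
      simp only [List.nil_append, List.cons_append, List.cons.injEq] at h
      exact Or.inl ⟨u', by simp [h.1], h.2⟩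
  | cons x U' ih =>
    intro u a c d W v h
    cases u with
    | nil =>
      simp only [List.cons_append, List.nil_append, List.cons.injEq] at h
      obtain ⟨rfl, h2⟩ := h
      cases U' with
      | nil =>
        simp only [List.nil_append, List.cons.injEq] at h2
        exact Or.inr (Or.inr (Or.inl ⟨by simp, h2.1, h2.2⟩))
      | cons y U'' =>
        simp only [List.cons_append, List.cons.injEq] at h2
        obtain ⟨rfl, h3⟩ := h2
        exact Or.inr (Or.inr (Or.inr ⟨U'', by simp, h3.symm⟩))
    | cons e u' =>
      simp only [List.cons_append, List.cons.injEq] at h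
      obtain ⟨rfl, h2⟩ := h
      rcases ih u' a c d W v h2 with ⟨w, h3, h4⟩ | ⟨h3, h4, h5⟩ | ⟨h3, h4, h5⟩ | ⟨w, h3, h4⟩
      · exact Or.inl ⟨w, by simp [h3], h4⟩
      · exact Or.inr (Or.inl ⟨by simp [h3], h4, h5⟩)
      · exact Or.inr (Or.inr (Or.inl ⟨by simp [h3], h4, h5⟩))
      · exact Or.inr (Or.inr (Or.inr ⟨w, by simp [h3], h4⟩))


variable (hs : Symmetric adj)
include hs

lemma exposed_of_step {l l' : List V} (h : Step adj l l') {a : V}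
    (he : Exposed adj a l') : Exposed adj a l := by
  obtain ⟨u, v, c, d, hcd, rfl, rfl⟩ := h
  obtain ⟨U, W, hUW, hpre⟩ := he
  rcases occ_split U u a d c W v hUW.symm with ⟨w, h1, h2⟩ | ⟨h1, h2, h3⟩ |
    ⟨h1, h2, h3⟩ | ⟨w, h1, h2⟩
  · subst h1
    exact ⟨U, w ++ c :: d :: v, by simp, hpre⟩
  · subst h1; subst h2
    refine ⟨U ++ [c], v, by simp, ?_⟩
    intro y hy
    rcases List.mem_append.mp hy with hy | hy
    · exact hpre y hy
    · simp only [List.mem_singleton] at hy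
      subst hy; exact hs hcd
  · subst h1; subst h2
    exact ⟨u, d :: v, by simp, fun y hy => hpre y (List.mem_append_left _ hy)⟩
  · subst h1; subst h2
    refine ⟨u ++ c :: d :: w, W, by simp, ?_⟩
    intro y hy
    apply hpre y
    simp only [List.mem_append, List.mem_cons] at hy ⊢
    tauto

lemma exposed_of_steps {l l' : List V} (h : Steps adj l l') {a : V}
    (he : Exposed adj a l') : Exposed adj a l := by
  induction h with
  | refl => exact he
  | tail _ h ih => exact ih (exposed_of_step hs h he)

lemma steps_pull_front {a : V} : ∀ (u v : List V), (∀ y ∈ u, adj a y) →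
    Steps adj (u ++ a :: v) (a :: (u ++ v)) := by
  intro u
  induction u with
  | nil => intro v _; exact .refl
  | cons y u' ih =>
    intro v hu
    have h1 : Steps adj (u' ++ a :: v) (a :: (u' ++ v)) :=
      ih v (fun z hz => hu z (List.mem_cons_of_mem _ hz))
    have h2 : Steps adj (y :: (u' ++ a :: v)) (y :: a :: (u' ++ v)) :=
      Relation.ReflTransGen.lift (y :: ·)
        (fun _ _ h => by
          obtain ⟨p, q, c, d, hcd, rfl, rfl⟩ := h
          exact ⟨y :: p, q, c, d, hcd, rfl, rfl⟩) _ _ h1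
    refine h2.tail ⟨[], u' ++ v, y, a, hs (hu y List.mem_cons_self), rfl, rfl⟩

lemma exposed_steps {a : V} {l : List V} (he : Exposed adj a l) :
    ∃ u v, l = u ++ a :: v ∧ Steps adj l (a :: (u ++ v)) := by
  obtain ⟨u, v, rfl, hu⟩ := he
  exact ⟨u, v, rfl, steps_pull_front hs u v hu⟩

end Racg

namespace Scratch
variable {V : Type*} {adj : V → V → Prop}
open Racg

def HasPair (l : List V) : Prop := ∃ (u v : List V) (x : V), l = u ++ x :: x :: v
def Red (adj : V → V → Prop) (l : List V) : Prop := ∀ l', Steps adj l l' → ¬ HasPair l'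

variable (hs : Symmetric adj)
include hs

lemma pattern_of_step {l l' : List V} (h : Step adj l l') {a : V}
    (hp : Pattern adj a l') : Pattern adj a l := by
  obtain ⟨u, v, c, d, hcd, rfl, rfl⟩ := h
  obtain ⟨U, W, hUW, hW⟩ := hp
  rcases occ_split U u a d c W v hUW.symm with ⟨w, h1, h2⟩ | ⟨h1, h2, h3⟩ |
    ⟨h1, h2, h3⟩ | ⟨w, h1, h2⟩
  · subst h1; subst h2
    exact ⟨U, w ++ c :: d :: v, by simp,
      exposed_of_step hs ⟨w, v, c, d, hcd, rfl, rfl⟩ hW⟩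
  · subst h1; subst h2; subst h3
    obtain ⟨u2, v2, hdec, hpre⟩ := hW
    cases u2 with
    | nil =>
      simp only [List.nil_append, List.cons.injEq] at hdec
      obtain ⟨rfl, rfl⟩ := hdec
      exact ⟨U, c :: v, by simp, ⟨[], v, rfl, by simp⟩⟩
    | cons c' u3 =>
      simp only [List.cons_append, List.cons.injEq] at hdec
      obtain ⟨rfl, rfl⟩ := hdec
      refine ⟨U ++ [c], u3 ++ a :: v2, by simp, ⟨u3, v2, rfl, ?_⟩⟩
      intro y hy
      exact hpre y (List.mem_cons_of_mem _ hy)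
  · subst h1; subst h2; subst h3
    obtain ⟨u2, v2, rfl, hpre⟩ := hW
    refine ⟨u, d :: (u2 ++ a :: v2), by simp, ⟨d :: u2, v2, rfl, ?_⟩⟩
    intro y hy
    rcases List.mem_cons.mp hy with rfl | hy
    · exact hcd
    · exact hpre y hy
  · subst h1; subst h2
    exact ⟨u ++ c :: d :: w, W, by simp, hW⟩

lemma pattern_of_steps {l l' : List V} (h : Steps adj l l') {a : V}
    (hp : Pattern adj a l') : Pattern adj a l := by
  induction h with
  | refl => exact hp
  | tail _ h ih => exact ih (pattern_of_step hs h hp)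

lemma pattern_not_red {a : V} {l : List V} (hp : Pattern adj a l) : ¬ Red adj l := by
  obtain ⟨U, W, rfl, hW⟩ := hp
  obtain ⟨u2, v2, rfl, hsteps⟩ := exposed_steps hs hW
  intro hred
  have h1 : Steps adj (U ++ a :: (u2 ++ a :: v2)) (U ++ a :: a :: (u2 ++ v2)) := by
    refine Relation.ReflTransGen.lift (fun x => U ++ a :: x) (fun _ _ hst => ?_) _ _ hsteps
    obtain ⟨p, q, c, d, hcd, rfl, rfl⟩ := hst
    exact ⟨U ++ a :: p, q, c, d, hcd, by simp, by simp⟩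
  exact hred _ h1 ⟨U, u2 ++ v2, a, rfl⟩

omit hs

lemma hasPair_pattern {l : List V} (h : HasPair l) : ∃ x, Pattern adj x l := by
  obtain ⟨u, v, x, rfl⟩ := h
  exact ⟨x, u, x :: v, rfl, ⟨[], v, rfl, by simp⟩⟩

lemma red_of_steps {l l' : List V} (h : Steps adj l l') (hred : Red adj l) : Red adj l' :=
  fun l2 h2 => hred l2 (h.trans h2)

lemma red_tail {a : V} {l : List V} (h : Red adj (a :: l)) : Red adj l := by
  intro l2 h2 hp
  refine h (a :: l2) ?_ ?_
  · exact Relation.ReflTransGen.lift (a :: ·)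
      (fun _ _ hst => by
        obtain ⟨p, q, c, d, hcd, rfl, rfl⟩ := hst
        exact ⟨a :: p, q, c, d, hcd, rfl, rfl⟩) _ _ h2
  · obtain ⟨u, v, x, rfl⟩ := hp
    exact ⟨a :: u, v, x, rfl⟩

include hs

lemma not_red_cons_iff {a : V} {l : List V} (hl : Red adj l) :
    ¬ Red adj (a :: l) ↔ Exposed adj a l := by
  constructor
  · intro h
    simp only [Red, not_forall, not_not] at h
    obtain ⟨l2, hsteps, hpair⟩ := h
    obtain ⟨x, hpat⟩ := hasPair_pattern hpair
    have hpat2 : Pattern adj x (a :: l) := pattern_of_steps hs hsteps hpat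
    obtain ⟨U, W, hUW, hW⟩ := hpat2
    cases U with
    | nil =>
      simp only [List.nil_append, List.cons.injEq] at hUW
      obtain ⟨rfl, rfl⟩ := hUW
      exact hW
    | cons b U' =>
      simp only [List.cons_append, List.cons.injEq] at hUW
      obtain ⟨rfl, rfl⟩ := hUW
      exact absurd hl (pattern_not_red hs ⟨U', W, rfl, hW⟩)
  · intro he hred
    obtain ⟨u2, v2, rfl, hsteps⟩ := exposed_steps hs he
    refine hred (a :: a :: (u2 ++ v2)) ?_ ⟨[], u2 ++ v2, a, rfl⟩
    exact Relation.ReflTransGen.lift (a :: ·)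
      (fun _ _ hst => by
        obtain ⟨p, q, c, d, hcd, rfl, rfl⟩ := hst
        exact ⟨a :: p, q, c, d, hcd, rfl, rfl⟩) _ _ hsteps

end Scratch

namespace Track
open Racg Scratch
variable {V : Type*} {adj : V → V → Prop}

/-- A swap step together with the induced map on a distinguished position. -/
def TStep (adj : V → V → Prop) (p p' : List V × ℕ) : Prop :=
  ∃ u v c d, adj c d ∧ p.1 = u ++ c :: d :: v ∧ p'.1 = u ++ d :: c :: v ∧
    p'.2 = (if p.2 = u.length then u.length + 1
      else if p.2 = u.length + 1 then u.length else p.2)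

lemma tstep_exists {l l' : List V} (h : Step adj l l') (i : ℕ) :
    ∃ i', TStep adj (l, i) (l', i') := by
  obtain ⟨u, v, c, d, hcd, rfl, rfl⟩ := h
  exact ⟨_, u, v, c, d, hcd, rfl, rfl, rfl⟩

lemma tstep_lt {p p' : List V × ℕ} (h : TStep adj p p') (hlt : p.2 < p.1.length) :
    p'.2 < p'.1.length := by
  obtain ⟨u, v, c, d, _, h1, h2, h3⟩ := h
  rw [h1] at hlt; rw [h2, h3]
  simp only [List.length_append, List.length_cons] at *
  split_ifs <;> omega

lemma tstep_get {p p' : List V × ℕ} (h : TStep adj p p') (hlt : p.2 < p.1.length) :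
    p'.1[p'.2]? = p.1[p.2]? := by
  obtain ⟨u, v, c, d, _, h1, h2, h3⟩ := h
  rw [h1, h2, h3]
  rcases Nat.lt_trichotomy p.2 u.length with hc | hc | hc
  · rw [if_neg (by omega), if_neg (by omega),
      List.getElem?_append_left hc, List.getElem?_append_left hc]
  · rw [hc, if_pos rfl, List.getElem?_append_right (le_refl _),
      List.getElem?_append_right (by omega)]
    simp
  · rcases Nat.eq_or_lt_of_le hc with hc2 | hc2
    · rw [if_neg (by omega), if_pos hc2.symm,
        List.getElem?_append_right (by omega), List.getElem?_append_right (by omega)]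
      rw [← hc2]; simp
    · rw [if_neg (by omega), if_neg (by omega),
        List.getElem?_append_right (by omega), List.getElem?_append_right (by omega)]
      have : p.2 - u.length = (p.2 - u.length - 2) + 2 := by omega
      rw [this]
      simp

lemma take_mid (u w : List V) (c : V) : (u ++ c :: w).take (u.length + 1) = u ++ [c] := by
  have := List.take_length_add_append (l₁ := u) (l₂ := c :: w) (i := 1)
  simpa using this

lemma take_two (u w : List V) (c d : V) (k : ℕ) (hk : u.length + 2 ≤ k) :
    (u ++ c :: d :: w).take k = u ++ c :: d :: w.take (k - u.length - 2) := by
  have h : k = u.length + ((k - u.length - 2) + 2) := by omega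
  rw [h, List.take_append]
  simp [List.take_succ_cons]

lemma tstep_prefix {p p' : List V × ℕ} (h : TStep adj p p') (hlt : p.2 < p.1.length)
    {a : V} (ha : p.1[p.2]? = some a) (hpre : ∀ y ∈ p.1.take p.2, adj a y) :
    ∀ y ∈ p'.1.take p'.2, adj a y := by
  obtain ⟨u, v, c, d, hcd, h1, h2, h3⟩ := h
  rw [h1] at ha hpre
  rw [h2, h3]
  rcases Nat.lt_trichotomy p.2 u.length with hc | hc | hc
  · rw [if_neg (by omega), if_neg (by omega)]
    intro y hy
    apply hpre y
    rw [List.take_append_of_le_length (by omega)] at hy ⊢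
    exact hy
  · rw [hc] at ha hpre ⊢
    rw [if_pos rfl]
    have hga : a = c := by
      rw [List.getElem?_append_right (le_refl _)] at ha
      simpa using ha.symm
    subst hga
    rw [take_mid]
    intro y hy
    rcases List.mem_append.mp hy with hy | hy
    · exact hpre y (by rw [List.take_left]; exact hy)
    · simp only [List.mem_singleton] at hy
      subst hy; exact hcd
  · rcases Nat.eq_or_lt_of_le hc with hc2 | hc2
    · rw [if_neg (by omega), if_pos hc2.symm, List.take_left]
      intro y hy
      apply hpre y
      rw [← hc2, take_mid]
      exact List.mem_append_left _ hy
    · rw [if_neg (by omega), if_neg (by omega),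
        take_two _ _ _ _ _ (by omega), ]
      intro y hy
      apply hpre y
      rw [take_two _ _ _ _ _ (by omega)]
      simp only [List.mem_append, List.mem_cons] at hy ⊢
      tauto

lemma tstep_erase {p p' : List V × ℕ} (h : TStep adj p p') (hlt : p.2 < p.1.length) :
    Steps adj (p.1.eraseIdx p.2) (p'.1.eraseIdx p'.2) := by
  obtain ⟨u, v, c, d, hcd, h1, h2, h3⟩ := h
  rw [h1]
  rw [h2, h3]
  rcases Nat.lt_trichotomy p.2 u.length with hc | hc | hc
  · rw [if_neg (by omega), if_neg (by omega),
      List.eraseIdx_append_of_lt_length hc, List.eraseIdx_append_of_lt_length hc]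
    exact Relation.ReflTransGen.single ⟨u.eraseIdx p.2, v, c, d, hcd, rfl, rfl⟩
  · rw [hc, if_pos rfl,
      List.eraseIdx_append_of_length_le (le_refl _),
      List.eraseIdx_append_of_length_le (by omega)]
    have h4 : u.length + 1 - u.length = 1 := by omega
    rw [Nat.sub_self, h4]
    simp only [List.eraseIdx]
    exact Relation.ReflTransGen.refl
  · rcases Nat.eq_or_lt_of_le hc with hc2 | hc2
    · rw [if_neg (by omega), if_pos hc2.symm,
        List.eraseIdx_append_of_length_le (by omega),
        List.eraseIdx_append_of_length_le (le_refl _)]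
      rw [Nat.sub_self, ← hc2]
      have h4 : u.length + 1 - u.length = 1 := by omega
      rw [h4]
      simp only [List.eraseIdx]
      exact Relation.ReflTransGen.refl
    · rw [if_neg (by omega), if_neg (by omega),
        List.eraseIdx_append_of_length_le (by omega),
        List.eraseIdx_append_of_length_le (by omega)]
      have h4 : p.2 - u.length = (p.2 - u.length - 2) + 2 := by omega
      rw [h4]
      simp only [List.eraseIdx]
      exact Relation.ReflTransGen.single
        ⟨u, v.eraseIdx (p.2 - u.length - 2), c, d, hcd, rfl, rfl⟩

variable (hs : Symmetric adj)

lemma steps_symm' {l l' : List V} (hsym : Symmetric adj) (h : Steps adj l l') :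
    Steps adj l' l := by
  induction h with
  | refl => exact .refl
  | tail _ hstep ih =>
    refine Relation.ReflTransGen.head ?_ ih
    obtain ⟨u, v, c, d, hcd, rfl, rfl⟩ := hstep
    exact ⟨u, v, d, c, hsym hcd, rfl, rfl⟩

lemma track_chain {l l' : List V} (h : Steps adj l l') :
    ∀ i, i < l.length →
    ∃ i', i' < l'.length ∧ l'[i']? = l[i]? ∧
      Steps adj (l.eraseIdx i) (l'.eraseIdx i') ∧
      (∀ a, l[i]? = some a → (∀ y ∈ l.take i, adj a y) → ∀ y ∈ l'.take i', adj a y) := by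
  induction h with
  | refl => exact fun i hi => ⟨i, hi, rfl, .refl, fun a _ hp => hp⟩
  | @tail m l' _ hstep ih =>
    intro i hi
    obtain ⟨j, hj, hget, herase, hpref⟩ := ih i hi
    obtain ⟨j', htj⟩ := tstep_exists hstep j
    refine ⟨j', tstep_lt htj hj, (tstep_get htj hj).trans hget, herase.trans (tstep_erase htj hj), ?_⟩
    intro a ha hp
    exact tstep_prefix htj hj (hget.trans ha) (hpref a ha hp)

include hs in
lemma steps_cons_cancel {a : V} {m m' : List V} (h : Steps adj (a :: m) (a :: m')) :
    Steps adj m m' := by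
  obtain ⟨i', hi', hget, herase, hpref⟩ := track_chain h 0 (by simp)
  have hp : ∀ y ∈ (a :: m').take i', adj a y := hpref a (by simp) (by simp)
  cases i' with
  | zero => simpa using herase
  | succ k =>
    simp only [List.length_cons, Nat.succ_lt_succ_iff] at hi'
    have hget2 : m'[k]? = some a := by simpa using hget
    have hk : k < m'.length := hi'
    have hgk : m'[k] = a := by
      have := List.getElem?_eq_getElem hk
      rw [this] at hget2
      exact Option.some.inj hget2
    have hdec : m' = m'.take k ++ a :: m'.drop (k + 1) := by
      conv_lhs => rw [← List.take_append_drop k m']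
      rw [List.drop_eq_getElem_cons hk, hgk]
    have hpre2 : ∀ y ∈ m'.take k, adj a y := by
      intro y hy
      apply hp
      rw [List.take_succ_cons]
      exact List.mem_cons_of_mem _ hy
    have hsteps2 : Steps adj m' (a :: (m'.take k ++ m'.drop (k + 1))) := by
      conv_lhs => rw [hdec]
      exact steps_pull_front hs _ _ hpre2
    have herase2 : (a :: m').eraseIdx (k + 1) = a :: (m'.take k ++ m'.drop (k + 1)) := by
      rw [List.eraseIdx_cons_succ, List.eraseIdx_eq_take_drop_succ]
    rw [herase2] at herase
    simp only [List.eraseIdx_zero, List.tail_cons] at herase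
    exact herase.trans (steps_symm' hs hsteps2)
end Track

namespace Act
open Racg Scratch Track
variable {V : Type*} {adj : V → V → Prop}

def stepSetoid (adj : V → V → Prop) (hs : Symmetric adj) : Setoid (List V) :=
  ⟨Steps adj, ⟨fun _ => .refl, steps_symm' hs, Relation.ReflTransGen.trans⟩⟩

variable (hs : Symmetric adj)

abbrev Q (adj : V → V → Prop) (hs : Symmetric adj) := Quotient (stepSetoid adj hs)

def RedQ : Q adj hs → Prop :=
  Quotient.lift (Red adj) (fun l l' (h : Steps adj l l') =>
    propext ⟨red_of_steps h, red_of_steps (steps_symm' hs h)⟩)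

def NRed (adj : V → V → Prop) (hs : Symmetric adj) := {q : Q adj hs // RedQ hs q}

open Classical in
noncomputable def phiFun (a : V) (l : List V) : Q adj hs :=
  if h : Exposed adj a l then
    Quotient.mk _ (h.choose ++ h.choose_spec.choose)
  else Quotient.mk _ (a :: l)

include hs in
lemma phiFun_steps {a : V} {l : List V} (h : Exposed adj a l) :
    Steps adj l (a :: (h.choose ++ h.choose_spec.choose)) := by
  have h1 := h.choose_spec.choose_spec
  obtain ⟨hdec, hpre⟩ := h1
  conv_lhs => rw [hdec]
  exact steps_pull_front hs _ _ hpre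

lemma phiFun_resp (a : V) {l l' : List V} (h : Steps adj l l') :
    phiFun hs a l = phiFun hs a l' := by
  by_cases hE : Exposed adj a l
  · have hE' : Exposed adj a l' := exposed_of_steps hs (steps_symm' hs h) hE
    rw [phiFun, dif_pos hE, phiFun, dif_pos hE']
    apply Quotient.sound
    have h1 : Steps adj l (a :: (hE.choose ++ hE.choose_spec.choose)) := phiFun_steps hs hE
    have h2 : Steps adj l' (a :: (hE'.choose ++ hE'.choose_spec.choose)) := phiFun_steps hs hE'
    exact steps_cons_cancel hs (((steps_symm' hs h1).trans h).trans h2)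
  · have hE' : ¬ Exposed adj a l' := fun hc => hE (exposed_of_steps hs h hc)
    rw [phiFun, dif_neg hE, phiFun, dif_neg hE']
    exact Quotient.sound (Relation.ReflTransGen.lift (a :: ·)
      (fun _ _ hst => by
        obtain ⟨p, q, c, d, hcd, rfl, rfl⟩ := hst
        exact ⟨a :: p, q, c, d, hcd, rfl, rfl⟩) _ _ h)

noncomputable def phiQ (a : V) : Q adj hs → Q adj hs :=
  Quotient.lift (phiFun hs a) (fun _ _ h => phiFun_resp hs a h)

lemma phiQ_eq_of {a : V} {l m : List V} (h : Steps adj l (a :: m)) :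
    phiQ hs a (Quotient.mk _ l) = Quotient.mk _ m := by
  have hE : Exposed adj a l :=
    exposed_of_steps hs h ⟨[], m, rfl, by simp⟩
  show phiFun hs a l = _
  rw [phiFun, dif_pos hE]
  apply Quotient.sound
  have h1 : Steps adj l (a :: (hE.choose ++ hE.choose_spec.choose)) := phiFun_steps hs hE
  exact steps_cons_cancel hs ((steps_symm' hs h1).trans h)

lemma phiQ_eq_not {a : V} {l : List V} (h : ¬ Exposed adj a l) :
    phiQ hs a (Quotient.mk _ l) = Quotient.mk _ (a :: l) := by
  show phiFun hs a l = _
  rw [phiFun, dif_neg h]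

lemma phiQ_comm {a b : V} (hab : adj a b) (q : Q adj hs) :
    phiQ hs a (phiQ hs b q) = phiQ hs b (phiQ hs a q) := by
  by_cases haa : a = b
  · subst haa; rfl
  · -- auxiliary covering the case ¬ Exposed a l
    have aux : ∀ (a b : V), adj a b → a ≠ b → ∀ l : List V, ¬ Exposed adj a l →
        phiQ hs a (phiQ hs b (Quotient.mk _ l)) = phiQ hs b (phiQ hs a (Quotient.mk _ l)) := by
      intro a b hab hne l hEa
      by_cases hEb : Exposed adj b l
      · obtain ⟨u, v, rfl, hst⟩ := exposed_steps hs hEb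
        have h1 : phiQ hs b (Quotient.mk _ (u ++ b :: v)) = Quotient.mk _ (u ++ v) :=
          phiQ_eq_of hs hst
        rw [h1]
        have hEam : ¬ Exposed adj a (u ++ v) := by
          intro hc
          apply hEa
          refine exposed_of_steps hs hst ?_
          obtain ⟨u2, v2, hdec, hpre⟩ := hc
          exact ⟨b :: u2, v2, by rw [hdec]; rfl, fun y hy => by
            rcases List.mem_cons.mp hy with rfl | hy
            · exact hab
            · exact hpre y hy⟩
        rw [phiQ_eq_not hs hEam, phiQ_eq_not hs hEa]
        have h2 : Steps adj (a :: (u ++ b :: v)) (b :: a :: (u ++ v)) := by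
          have h3 : Steps adj (a :: (u ++ b :: v)) (a :: b :: (u ++ v)) :=
            Relation.ReflTransGen.lift (a :: ·)
              (fun _ _ hstp => by
                obtain ⟨p, q2, c, d, hcd, rfl, rfl⟩ := hstp
                exact ⟨a :: p, q2, c, d, hcd, rfl, rfl⟩) _ _ hst
          exact h3.tail ⟨[], u ++ v, a, b, hab, rfl, rfl⟩
        exact (phiQ_eq_of hs h2).symm
      · rw [phiQ_eq_not hs hEb, phiQ_eq_not hs hEa]
        have hEab : ¬ Exposed adj a (b :: l) := by
          intro hc
          obtain ⟨u2, v2, hdec, hpre⟩ := hc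
          cases u2 with
          | nil =>
            simp only [List.nil_append, List.cons.injEq] at hdec
            exact hne hdec.1.symm
          | cons y u3 =>
            simp only [List.cons_append, List.cons.injEq] at hdec
            exact hEa ⟨u3, v2, hdec.2, fun z hz => hpre z (List.mem_cons_of_mem _ hz)⟩
        have hEba : ¬ Exposed adj b (a :: l) := by
          intro hc
          obtain ⟨u2, v2, hdec, hpre⟩ := hc
          cases u2 with
          | nil =>
            simp only [List.nil_append, List.cons.injEq] at hdec
            exact hne hdec.1
          | cons y u3 =>
            simp only [List.cons_append, List.cons.injEq] at hdec
            exact hEb ⟨u3, v2, hdec.2, fun z hz => hpre z (List.mem_cons_of_mem _ hz)⟩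
        rw [phiQ_eq_not hs hEab, phiQ_eq_not hs hEba]
        exact Quotient.sound (Relation.ReflTransGen.single ⟨[], l, a, b, hab, rfl, rfl⟩)
    induction q using Quotient.ind with
    | _ l =>
      by_cases hEa : Exposed adj a l
      · by_cases hEb : Exposed adj b l
        · -- both exposed
          obtain ⟨u, v, rfl, hstA⟩ := exposed_steps hs hEa
          have hEbm : Exposed adj b (u ++ v) := by
            have hEb2 : Exposed adj b (a :: (u ++ v)) := exposed_of_steps hs (steps_symm' hs hstA) hEb
            obtain ⟨u2, v2, hdec, hpre⟩ := hEb2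
            cases u2 with
            | nil =>
              simp only [List.nil_append, List.cons.injEq] at hdec
              exact absurd hdec.1 haa
            | cons y u3 =>
              simp only [List.cons_append, List.cons.injEq] at hdec
              exact ⟨u3, v2, hdec.2, fun z hz => hpre z (List.mem_cons_of_mem _ hz)⟩
          obtain ⟨u2, v2, hdec2, hstB⟩ := exposed_steps hs hEbm
          -- l ~ a :: (u++v) ~ a :: b :: (u2++v2) ~ b :: a :: (u2++v2)
          have c1 : Steps adj (u ++ a :: v) (a :: (b :: (u2 ++ v2))) := by
            refine hstA.trans ?_
            exact Relation.ReflTransGen.lift (a :: ·)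
              (fun _ _ hstp => by
                obtain ⟨p, q2, c, d, hcd, rfl, rfl⟩ := hstp
                exact ⟨a :: p, q2, c, d, hcd, rfl, rfl⟩) _ _ hstB
          have c2 : Steps adj (u ++ a :: v) (b :: (a :: (u2 ++ v2))) :=
            c1.tail ⟨[], u2 ++ v2, a, b, hab, rfl, rfl⟩
          rw [phiQ_eq_of hs c1, phiQ_eq_of hs c2]
          rw [phiQ_eq_of hs (Relation.ReflTransGen.refl :
            Steps adj (b :: (u2 ++ v2)) (b :: (u2 ++ v2)))]
          rw [phiQ_eq_of hs (Relation.ReflTransGen.refl :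
            Steps adj (a :: (u2 ++ v2)) (a :: (u2 ++ v2)))]
        · exact (aux b a (hs hab) (fun h => haa h.symm) l hEb).symm
      · exact aux a b hab haa l hEa

lemma phiQ_red {a : V} {q : Q adj hs} (h : RedQ hs q) : RedQ hs (phiQ hs a q) := by
  induction q using Quotient.ind with
  | _ l =>
    have hl : Red adj l := h
    by_cases hE : Exposed adj a l
    · obtain ⟨u, v, rfl, hst⟩ := exposed_steps hs hE
      rw [phiQ_eq_of hs hst]
      exact red_tail (red_of_steps hst hl)
    · rw [phiQ_eq_not hs hE]
      by_contra hc
      exact hE ((not_red_cons_iff hs hl).mp hc)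

lemma phiQ_invol {a : V} {q : Q adj hs} (h : RedQ hs q) :
    phiQ hs a (phiQ hs a q) = q := by
  induction q using Quotient.ind with
  | _ l =>
    have hl : Red adj l := h
    by_cases hE : Exposed adj a l
    · obtain ⟨u, v, rfl, hst⟩ := exposed_steps hs hE
      rw [phiQ_eq_of hs hst]
      have hredam : Red adj (a :: (u ++ v)) := red_of_steps hst hl
      have hnE : ¬ Exposed adj a (u ++ v) := by
        intro hc
        exact pattern_not_red hs ⟨[], u ++ v, rfl, hc⟩ hredam
      rw [phiQ_eq_not hs hnE]
      exact (Quotient.sound hst).symm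
    · rw [phiQ_eq_not hs hE]
      exact phiQ_eq_of hs (Relation.ReflTransGen.refl : Steps adj (a :: l) (a :: l))

noncomputable def phiN (a : V) (x : NRed adj hs) : NRed adj hs :=
  ⟨phiQ hs a x.1, phiQ_red hs x.2⟩

lemma phiN_invol (a : V) (x : NRed adj hs) : phiN hs a (phiN hs a x) = x :=
  Subtype.ext (phiQ_invol hs x.2)

lemma phiN_comm {a b : V} (hab : adj a b) (x : NRed adj hs) :
    phiN hs a (phiN hs b x) = phiN hs b (phiN hs a x) :=
  Subtype.ext (phiQ_comm hs hab x.1)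

lemma steps_length' {l l' : List V} (h : Steps adj l l') : l.length = l'.length := by
  induction h with
  | refl => rfl
  | tail _ hstep ih =>
    obtain ⟨u, v, c, d, _, rfl, rfl⟩ := hstep
    simpa using ih

lemma red_nil : Red adj ([] : List V) := by
  intro l' hst hp
  have hlen : ([] : List V).length = l'.length := steps_length' hst
  obtain ⟨u, v, x, rfl⟩ := hp
  simp only [List.length_nil, List.length_append, List.length_cons] at hlen
  omega

noncomputable def baseN : NRed adj hs := ⟨Quotient.mk _ [], red_nil⟩

lemma phiN_foldr {l : List V} (h : Red adj l) :
    l.foldr (phiN hs) (baseN hs) = ⟨Quotient.mk _ l, h⟩ := by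
  induction l with
  | nil => rfl
  | cons a t ih =>
    have ht : Red adj t := red_tail h
    rw [List.foldr_cons, ih ht]
    apply Subtype.ext
    show phiQ hs a (Quotient.mk _ t) = Quotient.mk _ (a :: t)
    apply phiQ_eq_not hs
    intro hc
    exact (not_red_cons_iff hs ht).mpr hc h

lemma eq_nil_of_class_eq {l : List V}
    (h : (Quotient.mk (stepSetoid adj hs) l) = Quotient.mk _ []) : l = [] := by
  have := Quotient.exact h
  have hlen : l.length = ([] : List V).length := steps_length' this
  simpa using List.length_eq_zero_iff.mp (by simpa using hlen)

end Act

section Concrete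
open Racg Scratch Track Act

variable {n : ℕ}

/-! ### The Gauss diagram group as a RACG -/

/-- Adjacency (commutation) relation on Gauss generators. -/
def adjD (n : ℕ) (A B : GaussGen n) : Prop :=
  Disjoint A.1 B.1 ∨ A.1 ⊆ B.1 ∨ B.1 ⊆ A.1

lemma adjD_symm : Symmetric (adjD n) := by
  rintro A B (h | h | h)
  · exact Or.inl h.symm
  · exact Or.inr (Or.inr h)
  · exact Or.inr (Or.inl h)

/-- Evaluation of a word of Gauss generators in `D_n`. -/
def piD (l : List (GaussGen n)) : GaussGroup n :=
  (l.map (PresentedGroup.of (rels := gaussRels n))).prod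

lemma piD_nil : piD ([] : List (GaussGen n)) = 1 := rfl

lemma piD_cons (a : GaussGen n) (l : List (GaussGen n)) :
    piD (a :: l) = PresentedGroup.of a * piD l := by
  simp [piD]

lemma piD_append (l l' : List (GaussGen n)) : piD (l ++ l') = piD l * piD l' := by
  simp [piD]

lemma ofD_sq (a : GaussGen n) :
    (PresentedGroup.of (rels := gaussRels n) a) * PresentedGroup.of a = 1 := by
  have h1 := gaussRel_one (n := n) (Or.inl ⟨a, rfl⟩)
  rw [map_mul] at h1
  simpa [PresentedGroup.of] using h1

lemma ofD_comm' {a b : GaussGen n} (h : Disjoint a.1 b.1 ∨ a.1 ⊆ b.1) :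
    (PresentedGroup.of (rels := gaussRels n) a) * PresentedGroup.of b =
      PresentedGroup.of b * PresentedGroup.of a := by
  have h1 := gaussRel_one (n := n) (Or.inr ⟨a, b, h, rfl⟩)
  rw [map_mul, map_mul, map_mul, map_inv, map_inv] at h1
  rw [mul_inv_eq_one] at h1
  have h2 : (PresentedGroup.mk (gaussRels n)) (FreeGroup.of a) = PresentedGroup.of a := rfl
  have h3 : (PresentedGroup.mk (gaussRels n)) (FreeGroup.of b) = PresentedGroup.of b := rfl
  rw [h2, h3] at h1
  conv_rhs => rw [← h1]
  rw [inv_mul_cancel_right]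

lemma ofD_comm {a b : GaussGen n} (h : adjD n a b) :
    (PresentedGroup.of (rels := gaussRels n) a) * PresentedGroup.of b =
      PresentedGroup.of b * PresentedGroup.of a := by
  rcases h with h | h | h
  · exact ofD_comm' (Or.inl h)
  · exact ofD_comm' (Or.inr h)
  · exact (ofD_comm' (Or.inr h)).symm

lemma piD_step {l l' : List (GaussGen n)} (h : Step (adjD n) l l') : piD l = piD l' := by
  obtain ⟨u, v, c, d, hcd, rfl, rfl⟩ := h
  rw [piD_append, piD_append, piD_cons, piD_cons, piD_cons, piD_cons]
  rw [← mul_assoc, ← mul_assoc, mul_assoc (piD u), ofD_comm hcd]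
  group

lemma piD_steps {l l' : List (GaussGen n)} (h : Steps (adjD n) l l') : piD l = piD l' := by
  induction h with
  | refl => rfl
  | tail _ h ih => exact ih.trans (piD_step h)

/-- Deletion move. -/
def Del (l l' : List (GaussGen n)) : Prop :=
  ∃ u v x, l = u ++ x :: x :: v ∧ l' = u ++ v

def MoveD (l l' : List (GaussGen n)) : Prop := Step (adjD n) l l' ∨ Del l l'

lemma piD_del {l l' : List (GaussGen n)} (h : Del l l') : piD l = piD l' := by
  obtain ⟨u, v, x, rfl, rfl⟩ := h
  rw [piD_append, piD_append, piD_cons, piD_cons, ← mul_assoc, ← mul_assoc,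
    mul_assoc (piD u), ofD_sq, mul_one]

/-- The permutation of reduced classes induced by a Gauss generator. -/
noncomputable def permD (a : GaussGen n) : Equiv.Perm (NRed (adjD n) adjD_symm) :=
  ⟨phiN adjD_symm a, phiN adjD_symm a, phiN_invol adjD_symm a, phiN_invol adjD_symm a⟩

lemma permD_rels : ∀ r ∈ gaussRels n,
    FreeGroup.lift (fun a => permD (n := n) a) r = 1 := by
  rintro r (⟨a, rfl⟩ | ⟨a, b, hab, rfl⟩)
  · rw [map_mul]
    show permD (n := n) a * permD a = 1
    exact Equiv.ext fun x => phiN_invol adjD_symm a x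
  · have hadj : adjD n a b := by
      rcases hab with h | h
      · exact Or.inl h
      · exact Or.inr (Or.inl h)
    have hc : permD (n := n) a * permD b = permD b * permD a :=
      Equiv.ext fun x => phiN_comm adjD_symm hadj x
    rw [map_mul, map_mul, map_mul, map_inv, map_inv]
    show permD (n := n) a * permD b * (permD a)⁻¹ * (permD b)⁻¹ = 1
    rw [hc]
    group

noncomputable def alphaD : GaussGroup n →* Equiv.Perm (NRed (adjD n) adjD_symm) :=
  PresentedGroup.toGroup permD_rels

lemma alphaD_of (a : GaussGen n) :
    alphaD (PresentedGroup.of a) = permD a := PresentedGroup.toGroup.of _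

lemma alphaD_piD (l : List (GaussGen n)) (x : NRed (adjD n) adjD_symm) :
    alphaD (piD l) x = l.foldr (phiN adjD_symm) x := by
  induction l with
  | nil => rw [piD_nil, map_one]; rfl
  | cons a t ih =>
    rw [piD_cons, map_mul, Equiv.Perm.mul_apply, alphaD_of, ih]
    rfl

/-- The key word-problem fact: a word evaluating to `1` in `D_n` can be reduced
to the empty word by swap and deletion moves. -/
theorem piD_reduce : ∀ l : List (GaussGen n), piD l = 1 →
    Relation.ReflTransGen MoveD l [] := by
  have main : ∀ (N : ℕ) (l : List (GaussGen n)), l.length ≤ N → piD l = 1 →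
      Relation.ReflTransGen MoveD l [] := by
    intro N
    induction N with
    | zero =>
      intro l hl _
      have hnil : l = [] := List.length_eq_zero_iff.mp (by omega)
      rw [hnil]
    | succ N ih =>
      intro l hl hpi
      cases l with
      | nil => exact .refl
      | cons a t =>
        have hnred : ¬ Red (adjD n) (a :: t) := by
          intro hred
          have h1 : alphaD (piD (a :: t)) (baseN adjD_symm) = baseN adjD_symm := by
            rw [hpi, map_one]; rfl
          rw [alphaD_piD, phiN_foldr adjD_symm hred] at h1
          have h2 : Quotient.mk (stepSetoid (adjD n) adjD_symm) (a :: t) =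
              Quotient.mk _ [] := congrArg Subtype.val h1
          exact absurd (eq_nil_of_class_eq adjD_symm h2) (by simp)
        simp only [Red, not_forall, not_not] at hnred
        obtain ⟨l2, hsteps, hpair⟩ := hnred
        obtain ⟨u, v, x, rfl⟩ := hpair
        have hpi2 : piD (u ++ v) = 1 := by
          rw [← piD_del ⟨u, v, x, rfl, rfl⟩, ← piD_steps hsteps, hpi]
        have hlen1 : (a :: t).length = (u ++ x :: x :: v).length := steps_length' hsteps
        have hlen2 : (u ++ v).length ≤ N := by
          simp only [List.length_cons, List.length_append] at hlen1 hl ⊢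
          omega
        refine Relation.ReflTransGen.trans
          (Relation.ReflTransGen.mono (fun _ _ h => Or.inl h) _ _ hsteps)
          (Relation.ReflTransGen.head (Or.inr ⟨u, v, x, rfl, rfl⟩) (ih _ hlen2 hpi2))
  exact fun l => main l.length l le_rfl

/-! ### Cactus words and the Gauss word map -/

abbrev CGen (n : ℕ) := ↥(cactusSet n)

/-- Evaluation of a word of cactus generators in `J_n`. -/
def evalJ (l : List (CGen n)) : CactusGroup n :=
  (l.map (PresentedGroup.of (rels := cactusRels (cactusSet n)))).prod

lemma evalJ_nil : evalJ ([] : List (CGen n)) = 1 := rfl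

lemma evalJ_cons (a : CGen n) (l : List (CGen n)) :
    evalJ (a :: l) = PresentedGroup.of a * evalJ l := by simp [evalJ]

/-- The permutation attached to a cactus generator. -/
def wP (a : CGen n) : Equiv.Perm (Fin n) := wPerm n a.1.1 a.1.2

/-- The Gauss generator attached to a cactus generator. -/
def genOf (a : CGen n) : GaussGen n :=
  ⟨intervalFinset n a.1.1 a.1.2, two_le_intervalFinset_card a.2⟩

/-- The Gauss word of a cactus word. -/
def Phi : List (CGen n) → List (GaussGen n)
  | [] => []
  | a :: t => genOf a :: (Phi t).map (permGen n (wP a))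

lemma Phi_length (l : List (CGen n)) : (Phi l).length = l.length := by
  induction l with
  | nil => rfl
  | cons a t ih => simp [Phi, ih]

lemma cactusRel_one {C : Set (ℕ × ℕ)} {r : FreeGroup C} (h : r ∈ cactusRels C) :
    PresentedGroup.mk (cactusRels C) r = 1 :=
  (QuotientGroup.eq_one_iff _).mpr (Subgroup.subset_normalClosure h)

lemma sJ_sq (a : CGen n) :
    (PresentedGroup.of (rels := cactusRels (cactusSet n)) a) * PresentedGroup.of a = 1 := by
  have h1 := cactusRel_one (C := cactusSet n) (Or.inl ⟨a, rfl⟩)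
  rw [map_mul] at h1
  simpa [PresentedGroup.of] using h1

lemma sJ_disj {a b : CGen n} (h : a.1.2 < b.1.1 ∨ b.1.2 < a.1.1) :
    (PresentedGroup.of (rels := cactusRels (cactusSet n)) a) * PresentedGroup.of b =
      PresentedGroup.of b * PresentedGroup.of a := by
  have h1 := cactusRel_one (C := cactusSet n) (Or.inr (Or.inl ⟨a, b, h, rfl⟩))
  rw [map_mul, map_mul, map_mul, map_inv, map_inv] at h1
  rw [mul_inv_eq_one] at h1
  have e1 : (PresentedGroup.mk (cactusRels (cactusSet n))) (FreeGroup.of a) =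
    PresentedGroup.of a := rfl
  have e2 : (PresentedGroup.mk (cactusRels (cactusSet n))) (FreeGroup.of b) =
    PresentedGroup.of b := rfl
  rw [e1, e2] at h1
  conv_rhs => rw [← h1]
  rw [inv_mul_cancel_right]

/-- The reflected interval. -/
def reflC (a b : CGen n) (h1 : a.1.1 ≤ b.1.1) (h2 : b.1.2 ≤ a.1.2) : CGen n :=
  ⟨(a.1.1 + a.1.2 - b.1.2, a.1.1 + a.1.2 - b.1.1), by
    obtain ⟨ha1, ha2, ha3⟩ := a.2
    obtain ⟨hb1, hb2, hb3⟩ := b.2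
    refine ⟨by omega, by omega, by omega⟩⟩

lemma sJ_nested {a b : CGen n} (h1 : a.1.1 ≤ b.1.1) (h2 : b.1.2 ≤ a.1.2) :
    (PresentedGroup.of (rels := cactusRels (cactusSet n)) a) * PresentedGroup.of b =
      PresentedGroup.of (reflC a b h1 h2) * PresentedGroup.of a := by
  have hr := cactusRel_one (C := cactusSet n)
    (Or.inr (Or.inr ⟨a, b, reflC a b h1 h2, h1, h2, rfl, rfl, rfl⟩))
  rw [map_mul, map_mul, map_mul, map_inv, map_inv] at hr
  rw [mul_inv_eq_one] at hr
  have e1 : (PresentedGroup.mk (cactusRels (cactusSet n))) (FreeGroup.of a) =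
    PresentedGroup.of a := rfl
  have e2 : (PresentedGroup.mk (cactusRels (cactusSet n))) (FreeGroup.of b) =
    PresentedGroup.of b := rfl
  have e3 : (PresentedGroup.mk (cactusRels (cactusSet n))) (FreeGroup.of (reflC a b h1 h2)) =
    PresentedGroup.of (reflC a b h1 h2) := rfl
  rw [e1, e2, e3] at hr
  conv_rhs => rw [← hr]
  rw [inv_mul_cancel_right]


/-! ### Arithmetic of interval permutations -/

lemma wPerm_apply (p q : ℕ) (i : Fin n) : wPerm n p q i = wFun n p q i := rfl

lemma wFun_val (p q : ℕ) (i : Fin n) :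
    (wFun n p q i : ℕ) =
      if 1 ≤ p ∧ p ≤ (i : ℕ) + 1 ∧ (i : ℕ) + 1 ≤ q ∧ q ≤ n then p + q - ((i : ℕ) + 1) - 1
      else i := by
  unfold wFun
  split_ifs with h <;> rfl

lemma wPerm_mul_self (p q : ℕ) : wPerm n p q * wPerm n p q = 1 :=
  Equiv.ext fun i => wFun_involutive n p q i

lemma mem_intervalFinset {p q : ℕ} {i : Fin n} :
    i ∈ intervalFinset n p q ↔ p ≤ (i : ℕ) + 1 ∧ (i : ℕ) + 1 ≤ q := by
  simp [intervalFinset]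

lemma mem_image_wPerm (p q : ℕ) (s : Finset (Fin n)) (i : Fin n) :
    i ∈ s.image (wPerm n p q) ↔ wPerm n p q i ∈ s := by
  constructor
  · intro h
    obtain ⟨j, hj, hji⟩ := Finset.mem_image.mp h
    rw [← hji, wPerm_apply, wPerm_apply]
    rw [show wFun n p q (wFun n p q j) = j from wFun_involutive n p q j]
    exact hj
  · intro h
    exact Finset.mem_image.mpr ⟨wPerm n p q i, h, wFun_involutive n p q i⟩

lemma image_interval_nested {p q m r : ℕ} (h1 : 1 ≤ p) (h2 : p ≤ m) (h3 : m < r)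
    (h4 : r ≤ q) (h5 : q ≤ n) :
    (intervalFinset n m r).image (wPerm n p q) = intervalFinset n (p+q-r) (p+q-m) := by
  ext i
  rw [mem_image_wPerm, mem_intervalFinset, mem_intervalFinset, wPerm_apply]
  rw [show ((wFun n p q i : ℕ)) = _ from wFun_val p q i]
  have hi : (i : ℕ) < n := i.2
  split_ifs with hc <;> omega

lemma image_interval_super {p q m r : ℕ} (h1 : 1 ≤ m) (h2 : m ≤ p) (h3 : p < q)
    (h4 : q ≤ r) (h5 : r ≤ n) :
    (intervalFinset n m r).image (wPerm n p q) = intervalFinset n m r := by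
  ext i
  rw [mem_image_wPerm, mem_intervalFinset, mem_intervalFinset, wPerm_apply]
  rw [show ((wFun n p q i : ℕ)) = _ from wFun_val p q i]
  have hi : (i : ℕ) < n := i.2
  split_ifs with hc <;> omega

lemma image_interval_disj {p q m r : ℕ} (h0 : 1 ≤ p) (h1 : p < q) (h2 : q ≤ n)
    (h : q < m ∨ r < p) :
    (intervalFinset n m r).image (wPerm n p q) = intervalFinset n m r := by
  ext i
  rw [mem_image_wPerm, mem_intervalFinset, mem_intervalFinset, wPerm_apply]
  rw [show ((wFun n p q i : ℕ)) = _ from wFun_val p q i]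
  have hi : (i : ℕ) < n := i.2
  split_ifs with hc <;> omega

lemma image_interval_self {p q : ℕ} (h1 : 1 ≤ p) (h2 : p < q) (h3 : q ≤ n) :
    (intervalFinset n p q).image (wPerm n p q) = intervalFinset n p q :=
  image_interval_super h1 le_rfl h2 le_rfl h3

lemma wPerm_comm_disj {p q m r : ℕ} (hp : 1 ≤ p) (hpq : p < q) (hq : q ≤ n)
    (hm : 1 ≤ m) (hmr : m < r) (hr : r ≤ n) (h : q < m ∨ r < p) :
    wPerm n p q * wPerm n m r = wPerm n m r * wPerm n p q := by
  apply Equiv.ext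
  intro i
  apply Fin.ext
  show ((wFun n p q (wFun n m r i) : ℕ)) = ((wFun n m r (wFun n p q i) : ℕ))
  have hi : (i : ℕ) < n := i.2
  have e1 := wFun_val (n := n) p q i
  have e2 := wFun_val (n := n) m r i
  have e3 := wFun_val (n := n) p q (wFun n m r i)
  have e4 := wFun_val (n := n) m r (wFun n p q i)
  rw [e3, e4, e1, e2]
  split_ifs <;> omega

lemma wPerm_nested {p q m r : ℕ} (hp : 1 ≤ p) (h2 : p ≤ m) (h3 : m < r)
    (h4 : r ≤ q) (h5 : q ≤ n) :
    wPerm n p q * wPerm n m r = wPerm n (p+q-r) (p+q-m) * wPerm n p q := by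
  apply Equiv.ext
  intro i
  apply Fin.ext
  show ((wFun n p q (wFun n m r i) : ℕ)) = ((wFun n (p+q-r) (p+q-m) (wFun n p q i) : ℕ))
  have hi : (i : ℕ) < n := i.2
  have e1 := wFun_val (n := n) p q i
  have e2 := wFun_val (n := n) m r i
  have e3 := wFun_val (n := n) p q (wFun n m r i)
  have e4 := wFun_val (n := n) (p+q-r) (p+q-m) (wFun n p q i)
  rw [e3, e4, e1, e2]
  split_ifs <;> omega

lemma interval_subset_iff {p q m r : ℕ} (ha : (p, q) ∈ cactusSet n)
    (hb : (m, r) ∈ cactusSet n) :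
    intervalFinset n m r ⊆ intervalFinset n p q ↔ p ≤ m ∧ r ≤ q := by
  obtain ⟨ha1, ha2, ha3⟩ := ha
  obtain ⟨hb1, hb2, hb3⟩ := hb
  constructor
  · intro hsub
    have hm : (⟨m - 1, by omega⟩ : Fin n) ∈ intervalFinset n m r :=
      mem_intervalFinset.mpr (by simp; omega)
    have hr : (⟨r - 1, by omega⟩ : Fin n) ∈ intervalFinset n m r :=
      mem_intervalFinset.mpr (by simp; omega)
    have h1 := mem_intervalFinset.mp (hsub hm)
    have h2 := mem_intervalFinset.mp (hsub hr)
    simp only [Fin.val_mk] at h1 h2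
    omega
  · intro ⟨h1, h2⟩ i hi
    rw [mem_intervalFinset] at hi ⊢
    omega

lemma interval_disjoint_iff {p q m r : ℕ} (ha : (p, q) ∈ cactusSet n)
    (hb : (m, r) ∈ cactusSet n) :
    Disjoint (intervalFinset n p q) (intervalFinset n m r) ↔ q < m ∨ r < p := by
  obtain ⟨ha1, ha2, ha3⟩ := ha
  obtain ⟨hb1, hb2, hb3⟩ := hb
  constructor
  · intro hd
    by_contra hc
    push_neg at hc
    have h1 : (⟨max p m - 1, by omega⟩ : Fin n) ∈ intervalFinset n p q :=
      mem_intervalFinset.mpr (by simp; omega)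
    have h2 : (⟨max p m - 1, by omega⟩ : Fin n) ∈ intervalFinset n m r :=
      mem_intervalFinset.mpr (by simp; omega)
    exact Finset.disjoint_left.mp hd h1 h2
  · intro h
    rw [Finset.disjoint_left]
    intro i hi1 hi2
    rw [mem_intervalFinset] at hi1 hi2
    omega

lemma interval_eq_iff {p q m r : ℕ} (ha : (p, q) ∈ cactusSet n)
    (hb : (m, r) ∈ cactusSet n)
    (h : intervalFinset n p q = intervalFinset n m r) : p = m ∧ q = r := by
  have h1 := (interval_subset_iff hb ha).mp (le_of_eq h)
  have h2 := (interval_subset_iff ha hb).mp (le_of_eq h.symm)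
  omega

lemma permGen_comp (σ τ : Equiv.Perm (Fin n)) (x : GaussGen n) :
    permGen n σ (permGen n τ x) = permGen n (σ * τ) x := by
  apply Subtype.ext
  simp only [permGen, Finset.image_image]
  rfl

lemma permGen_one (x : GaussGen n) : permGen n 1 x = x := by
  apply Subtype.ext
  simp [permGen]

lemma adjD_permGen (σ : Equiv.Perm (Fin n)) (A B : GaussGen n) :
    adjD n (permGen n σ A) (permGen n σ B) ↔ adjD n A B := by
  unfold adjD permGen
  simp only [Finset.disjoint_image σ.injective,
    Finset.image_subset_image_iff σ.injective]



/-! ### Lifting Gauss-word moves to cactus words -/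

lemma permGen_wP_self (a : CGen n) : permGen n (wP a) (genOf a) = genOf a := by
  obtain ⟨h1, h2, h3⟩ := a.2
  exact Subtype.ext (image_interval_self h1 h2 h3)

lemma adjD_genOf (a b : CGen n) :
    adjD n (genOf a) (permGen n (wP a) (genOf b)) ↔ adjD n (genOf a) (genOf b) := by
  conv_lhs => rw [← permGen_wP_self a]
  exact adjD_permGen _ _ _

lemma map_permGen_mul (σ τ : Equiv.Perm (Fin n)) (L : List (GaussGen n)) :
    (L.map (permGen n τ)).map (permGen n σ) = L.map (permGen n (σ * τ)) := by
  rw [List.map_map]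
  exact List.map_congr_left (fun x _ => permGen_comp σ τ x)

lemma wP_mul_self (a : CGen n) : wP a * wP a = 1 := wPerm_mul_self _ _

lemma map_permGen_invol (a : CGen n) (L : List (GaussGen n)) :
    ((L.map (permGen n (wP a))).map (permGen n (wP a))) = L := by
  rw [map_permGen_mul, wP_mul_self]
  exact List.map_congr_left (fun x _ => permGen_one x) |>.trans (List.map_id L)

lemma lift_swap (a b : CGen n) (h : adjD n (genOf a) (permGen n (wP a) (genOf b))) :
    ∃ a' b' : CGen n,
      (PresentedGroup.of (rels := cactusRels (cactusSet n)) a) * PresentedGroup.of b =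
        PresentedGroup.of a' * PresentedGroup.of b' ∧
      genOf a' = permGen n (wP a) (genOf b) ∧
      permGen n (wP a') (genOf b') = genOf a ∧
      wP a' * wP b' = wP a * wP b := by
  obtain ⟨pa1, pa2, pa3⟩ := a.2
  obtain ⟨pb1, pb2, pb3⟩ := b.2
  rcases (adjD_genOf a b).mp h with hd | hsub | hsub
  · -- disjoint intervals
    have harith : a.1.2 < b.1.1 ∨ b.1.2 < a.1.1 := (interval_disjoint_iff a.2 b.2).mp hd
    refine ⟨b, a, sJ_disj harith, ?_, ?_, ?_⟩
    · exact (Subtype.ext (image_interval_disj pa1 pa2 pa3 harith)).symm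
    · exact Subtype.ext (image_interval_disj pb1 pb2 pb3 (by omega))
    · exact wPerm_comm_disj pb1 pb2 pb3 pa1 pa2 pa3 (by omega)
  · -- I_a ⊆ I_b
    have harith : b.1.1 ≤ a.1.1 ∧ a.1.2 ≤ b.1.2 := (interval_subset_iff b.2 a.2).mp hsub
    obtain ⟨hm1, hm2⟩ := harith
    refine ⟨b, reflC b a hm1 hm2, ?_, ?_, ?_, ?_⟩
    · have h1' : b.1.1 ≤ (reflC b a hm1 hm2).1.1 := by simp only [reflC]; omega
      have h2' : (reflC b a hm1 hm2).1.2 ≤ b.1.2 := by simp only [reflC]; omega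
      have hr := sJ_nested (a := b) (b := reflC b a hm1 hm2) h1' h2'
      have he : reflC b (reflC b a hm1 hm2) h1' h2' = a := by
        apply Subtype.ext
        apply Prod.ext <;> (simp only [reflC]; omega)
      rw [he] at hr
      exact hr.symm
    · exact (Subtype.ext (image_interval_super pb1 hm1 pa2 hm2 pb3)).symm
    · apply Subtype.ext
      show (intervalFinset n (b.1.1 + b.1.2 - a.1.2) (b.1.1 + b.1.2 - a.1.1)).image
        (wPerm n b.1.1 b.1.2) = intervalFinset n a.1.1 a.1.2
      rw [image_interval_nested pb1 (by omega) (by omega) (by omega) pb3]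
      rw [show b.1.1 + b.1.2 - (b.1.1 + b.1.2 - a.1.1) = a.1.1 by omega,
        show b.1.1 + b.1.2 - (b.1.1 + b.1.2 - a.1.2) = a.1.2 by omega]
    · show wPerm n b.1.1 b.1.2 * wPerm n (b.1.1 + b.1.2 - a.1.2) (b.1.1 + b.1.2 - a.1.1) =
        wPerm n a.1.1 a.1.2 * wPerm n b.1.1 b.1.2
      have := wPerm_nested (n := n) pb1 (show b.1.1 ≤ b.1.1 + b.1.2 - a.1.2 by omega)
        (show b.1.1 + b.1.2 - a.1.2 < b.1.1 + b.1.2 - a.1.1 by omega)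
        (show b.1.1 + b.1.2 - a.1.1 ≤ b.1.2 by omega) pb3
      rw [show b.1.1 + b.1.2 - (b.1.1 + b.1.2 - a.1.1) = a.1.1 by omega,
        show b.1.1 + b.1.2 - (b.1.1 + b.1.2 - a.1.2) = a.1.2 by omega] at this
      exact this
  · -- I_b ⊆ I_a
    have harith : a.1.1 ≤ b.1.1 ∧ b.1.2 ≤ a.1.2 := (interval_subset_iff a.2 b.2).mp hsub
    obtain ⟨hm1, hm2⟩ := harith
    refine ⟨reflC a b hm1 hm2, a, sJ_nested hm1 hm2, ?_, ?_, ?_⟩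
    · apply Subtype.ext
      show intervalFinset n (a.1.1 + a.1.2 - b.1.2) (a.1.1 + a.1.2 - b.1.1) =
        (intervalFinset n b.1.1 b.1.2).image (wPerm n a.1.1 a.1.2)
      rw [image_interval_nested pa1 hm1 pb2 hm2 pa3]
    · apply Subtype.ext
      show (intervalFinset n a.1.1 a.1.2).image
        (wPerm n (a.1.1 + a.1.2 - b.1.2) (a.1.1 + a.1.2 - b.1.1)) =
        intervalFinset n a.1.1 a.1.2
      exact image_interval_super pa1 (by omega) (by omega) (by omega) pa3
    · show wPerm n (a.1.1 + a.1.2 - b.1.2) (a.1.1 + a.1.2 - b.1.1) * wPerm n a.1.1 a.1.2 =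
        wPerm n a.1.1 a.1.2 * wPerm n b.1.1 b.1.2
      exact (wPerm_nested pa1 hm1 pb2 hm2 pa3).symm

lemma lift_del_eq (a b : CGen n) (h : genOf a = permGen n (wP a) (genOf b)) : b = a := by
  have h2 : permGen n (wP a) (genOf a) = genOf b := by
    rw [h, permGen_comp, wP_mul_self, permGen_one]
  rw [permGen_wP_self] at h2
  have h3 := interval_eq_iff b.2 a.2 (congrArg Subtype.val h2.symm)
  exact Subtype.ext (Prod.ext h3.1 h3.2)


lemma evalJ_cons_cons (a b : CGen n) (t : List (CGen n)) :
    evalJ (a :: b :: t) =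
      (PresentedGroup.of (rels := cactusRels (cactusSet n)) a * PresentedGroup.of b) *
        evalJ t := by
  rw [evalJ_cons, evalJ_cons, mul_assoc]

lemma lift_step_word : ∀ (c : List (CGen n)) (g' : List (GaussGen n)),
    Step (adjD n) (Phi c) g' → ∃ c', evalJ c' = evalJ c ∧ Phi c' = g' := by
  intro c
  induction c with
  | nil =>
    intro g' h
    obtain ⟨u, v, X, Y, _, h1, _⟩ := h
    exfalso
    cases u <;> simp [Phi] at h1
  | cons a t ih =>
    intro g' h
    obtain ⟨u, v, X, Y, hadj, hdec, hdec'⟩ := h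
    cases u with
    | nil =>
      simp only [Phi, List.nil_append, List.cons.injEq] at hdec
      obtain ⟨hX, hrest⟩ := hdec
      cases t with
      | nil => simp [Phi] at hrest
      | cons b t2 =>
        simp only [Phi, List.map_cons, List.cons.injEq] at hrest
        obtain ⟨hY, hv⟩ := hrest
        subst hX; subst hY; subst hv
        obtain ⟨a', b', hJ, hg1, hg2, hw⟩ := lift_swap a b hadj
        refine ⟨a' :: b' :: t2, ?_, ?_⟩
        · rw [evalJ_cons_cons, evalJ_cons_cons, hJ]
        · rw [hdec']
          simp only [List.nil_append]
          show genOf a' :: permGen n (wP a') (genOf b') ::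
              ((Phi t2).map (permGen n (wP b'))).map (permGen n (wP a')) =
            permGen n (wP a) (genOf b) :: genOf a ::
              ((Phi t2).map (permGen n (wP b))).map (permGen n (wP a))
          rw [map_permGen_mul, map_permGen_mul, hw, hg1, hg2]
    | cons X0 u2 =>
      simp only [Phi, List.cons_append, List.cons.injEq] at hdec
      obtain ⟨hX0, hrest⟩ := hdec
      have hstep : Step (adjD n) (Phi t) ((u2 ++ Y :: X :: v).map (permGen n (wP a))) := by
        have hPhit : Phi t = ((u2 ++ X :: Y :: v).map (permGen n (wP a))) := by
          rw [← hrest, map_permGen_invol]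
        rw [hPhit]
        simp only [List.map_append, List.map_cons]
        exact ⟨u2.map (permGen n (wP a)), v.map (permGen n (wP a)),
          permGen n (wP a) X, permGen n (wP a) Y, (adjD_permGen _ _ _).mpr hadj, rfl, rfl⟩
      obtain ⟨t', hJ, hPhi⟩ := ih _ hstep
      refine ⟨a :: t', ?_, ?_⟩
      · rw [evalJ_cons, evalJ_cons, hJ]
      · show genOf a :: (Phi t').map (permGen n (wP a)) = g'
        rw [hPhi, map_permGen_invol, hdec', hX0]
        rfl

lemma lift_del_word : ∀ (c : List (CGen n)) (g' : List (GaussGen n)),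
    Del (Phi c) g' → ∃ c', evalJ c' = evalJ c ∧ Phi c' = g' := by
  intro c
  induction c with
  | nil =>
    intro g' h
    obtain ⟨u, v, X, h1, _⟩ := h
    exfalso
    cases u <;> simp [Phi] at h1
  | cons a t ih =>
    intro g' h
    obtain ⟨u, v, X, hdec, hdec'⟩ := h
    cases u with
    | nil =>
      simp only [Phi, List.nil_append, List.cons.injEq] at hdec
      obtain ⟨hX, hrest⟩ := hdec
      cases t with
      | nil => simp [Phi] at hrest
      | cons b t2 =>
        simp only [Phi, List.map_cons, List.cons.injEq] at hrest
        obtain ⟨hY, hv⟩ := hrest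
        have hba : b = a := lift_del_eq a b (by rw [hX, hY])
        subst hba
        refine ⟨t2, ?_, ?_⟩
        · rw [evalJ_cons_cons, sJ_sq, one_mul]
        · rw [hdec', List.nil_append, ← hv, map_permGen_invol]
    | cons X0 u2 =>
      simp only [Phi, List.cons_append, List.cons.injEq] at hdec
      obtain ⟨hX0, hrest⟩ := hdec
      have hdel : Del (Phi t) ((u2 ++ v).map (permGen n (wP a))) := by
        have hPhit : Phi t = ((u2 ++ X :: X :: v).map (permGen n (wP a))) := by
          rw [← hrest, map_permGen_invol]
        rw [hPhit]
        simp only [List.map_append, List.map_cons]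
        exact ⟨u2.map (permGen n (wP a)), v.map (permGen n (wP a)),
          permGen n (wP a) X, rfl, rfl⟩
      obtain ⟨t', hJ, hPhi⟩ := ih _ hdel
      refine ⟨a :: t', ?_, ?_⟩
      · rw [evalJ_cons, evalJ_cons, hJ]
      · show genOf a :: (Phi t').map (permGen n (wP a)) = g'
        rw [hPhi, map_permGen_invol, hdec', hX0]
        rfl

lemma lift_chain : ∀ (c : List (CGen n)) (g' : List (GaussGen n)),
    Relation.ReflTransGen MoveD (Phi c) g' →
    ∃ c', evalJ c' = evalJ c ∧ Phi c' = g' := by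
  intro c g' h
  induction h with
  | refl => exact ⟨c, rfl, rfl⟩
  | tail _ hmove ih =>
    obtain ⟨c1, hJ1, hPhi1⟩ := ih
    rcases hmove with hstep | hdel
    · rw [← hPhi1] at hstep
      obtain ⟨c2, hJ2, hPhi2⟩ := lift_step_word c1 _ hstep
      exact ⟨c2, hJ2.trans hJ1, hPhi2⟩
    · rw [← hPhi1] at hdel
      obtain ⟨c2, hJ2, hPhi2⟩ := lift_del_word c1 _ hdel
      exact ⟨c2, hJ2.trans hJ1, hPhi2⟩

lemma evalJ_append (c1 c2 : List (CGen n)) : evalJ (c1 ++ c2) = evalJ c1 * evalJ c2 := by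
  simp [evalJ]

lemma exists_word (x : CactusGroup n) : ∃ c : List (CGen n), evalJ c = x := by
  induction x using QuotientGroup.induction_on with
  | _ w =>
    induction w using FreeGroup.induction_on with
    | C1 => exact ⟨[], rfl⟩
    | of a =>
      refine ⟨[a], ?_⟩
      show PresentedGroup.of a * 1 = _
      rw [mul_one]
      rfl
    | inv_of a _ =>
      refine ⟨[a], ?_⟩
      show evalJ [a] = (QuotientGroup.mk ((FreeGroup.of a)⁻¹) : CactusGroup n)
      rw [QuotientGroup.mk_inv]
      have h2 : (QuotientGroup.mk (FreeGroup.of a) : CactusGroup n) =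
          PresentedGroup.of (rels := cactusRels (cactusSet n)) a := rfl
      rw [h2]
      erw [inv_eq_of_mul_eq_one_left (sJ_sq a)]
      show PresentedGroup.of a * 1 = _
      rw [mul_one]
    | mul w1 w2 ih1 ih2 =>
      obtain ⟨c1, hc1⟩ := ih1
      obtain ⟨c2, hc2⟩ := ih2
      refine ⟨c1 ++ c2, ?_⟩
      rw [evalJ_append, hc1, hc2]
      rfl


/-! ### The homomorphism into the semidirect product -/

def fSDP (a : CGen n) :
    SemidirectProduct (GaussGroup n) (Equiv.Perm (Fin n)) (permAut n) :=
  ⟨PresentedGroup.of (genOf a), wP a⟩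

lemma permAut_of (σ : Equiv.Perm (Fin n)) (x : GaussGen n) :
    (permAut n σ) (PresentedGroup.of x) = PresentedGroup.of (permGen n σ x) :=
  permHom_of n σ x

lemma fSDP_rels : ∀ r ∈ cactusRels (cactusSet n),
    FreeGroup.lift (fSDP (n := n)) r = 1 := by
  rintro r (⟨a, rfl⟩ | ⟨a, b, hcond, rfl⟩ | ⟨a, b, c, hc1, hc2, hc3, hc4, rfl⟩)
  · rw [map_mul]
    simp only [FreeGroup.lift_apply_of]
    show fSDP a * fSDP a = 1
    apply SemidirectProduct.ext
    · rw [SemidirectProduct.mul_left]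
      show PresentedGroup.of (genOf a) *
        (permAut n (wP a)) (PresentedGroup.of (genOf a)) = 1
      rw [permAut_of, permGen_wP_self]
      exact ofD_sq _
    · show wP a * wP a = 1
      exact wP_mul_self a
  · rw [map_mul, map_mul, map_mul, map_inv, map_inv]
    simp only [FreeGroup.lift_apply_of]
    show fSDP a * fSDP b * (fSDP a)⁻¹ * (fSDP b)⁻¹ = 1
    obtain ⟨pa1, pa2, pa3⟩ := a.2
    obtain ⟨pb1, pb2, pb3⟩ := b.2
    have hcomm : fSDP a * fSDP b = fSDP b * fSDP a := by
      apply SemidirectProduct.ext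
      · rw [SemidirectProduct.mul_left, SemidirectProduct.mul_left]
        show PresentedGroup.of (genOf a) *
            (permAut n (wP a)) (PresentedGroup.of (genOf b)) =
          PresentedGroup.of (genOf b) *
            (permAut n (wP b)) (PresentedGroup.of (genOf a))
        rw [permAut_of, permAut_of]
        rw [show permGen n (wP a) (genOf b) = genOf b from
          Subtype.ext (image_interval_disj pa1 pa2 pa3 hcond)]
        rw [show permGen n (wP b) (genOf a) = genOf a from
          Subtype.ext (image_interval_disj pb1 pb2 pb3 (by omega))]
        exact ofD_comm (Or.inl ((interval_disjoint_iff a.2 b.2).mpr hcond))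
      · show wP a * wP b = wP b * wP a
        exact wPerm_comm_disj pa1 pa2 pa3 pb1 pb2 pb3 hcond
    rw [hcomm]
    group
  · rw [map_mul, map_mul, map_mul, map_inv, map_inv]
    simp only [FreeGroup.lift_apply_of]
    show fSDP a * fSDP b * (fSDP a)⁻¹ * (fSDP c)⁻¹ = 1
    obtain ⟨pa1, pa2, pa3⟩ := a.2
    obtain ⟨pb1, pb2, pb3⟩ := b.2
    have hcrefl : c = reflC a b hc1 hc2 := by
      apply Subtype.ext
      apply Prod.ext
      · exact hc3
      · exact hc4
    have heq : fSDP a * fSDP b = fSDP c * fSDP a := by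
      apply SemidirectProduct.ext
      · rw [SemidirectProduct.mul_left, SemidirectProduct.mul_left]
        show PresentedGroup.of (genOf a) *
            (permAut n (wP a)) (PresentedGroup.of (genOf b)) =
          PresentedGroup.of (genOf c) *
            (permAut n (wP c)) (PresentedGroup.of (genOf a))
        rw [permAut_of, permAut_of, hcrefl]
        rw [show permGen n (wP a) (genOf b) = genOf (reflC a b hc1 hc2) from
          (Subtype.ext (by
            show (intervalFinset n b.1.1 b.1.2).image (wPerm n a.1.1 a.1.2) =
              intervalFinset n (a.1.1 + a.1.2 - b.1.2) (a.1.1 + a.1.2 - b.1.1)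
            exact image_interval_nested pa1 hc1 pb2 hc2 pa3))]
        rw [show permGen n (wP (reflC a b hc1 hc2)) (genOf a) = genOf a from
          (Subtype.ext (by
            show (intervalFinset n a.1.1 a.1.2).image
                (wPerm n (a.1.1 + a.1.2 - b.1.2) (a.1.1 + a.1.2 - b.1.1)) =
              intervalFinset n a.1.1 a.1.2
            exact image_interval_super pa1 (by omega) (by omega) (by omega) pa3))]
        refine ofD_comm (Or.inr (Or.inr ?_))
        refine (interval_subset_iff a.2 (reflC a b hc1 hc2).2).mpr ?_
        show a.1.1 ≤ a.1.1 + a.1.2 - b.1.2 ∧ a.1.1 + a.1.2 - b.1.1 ≤ a.1.2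
        omega
      · show wP a * wP b = wP c * wP a
        rw [hcrefl]
        show wPerm n a.1.1 a.1.2 * wPerm n b.1.1 b.1.2 =
          wPerm n (a.1.1 + a.1.2 - b.1.2) (a.1.1 + a.1.2 - b.1.1) *
            wPerm n a.1.1 a.1.2
        exact wPerm_nested pa1 hc1 pb2 hc2 pa3
    rw [heq]
    group

noncomputable def rho :
    CactusGroup n →* SemidirectProduct (GaussGroup n) (Equiv.Perm (Fin n)) (permAut n) :=
  PresentedGroup.toGroup fSDP_rels

lemma rho_of (a : CGen n) : rho (PresentedGroup.of a) = fSDP a :=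
  PresentedGroup.toGroup.of _

lemma permHom_piD (σ : Equiv.Perm (Fin n)) (L : List (GaussGen n)) :
    permHom n σ (piD L) = piD (L.map (permGen n σ)) := by
  induction L with
  | nil => rw [piD_nil, map_one]; rfl
  | cons x L ih =>
    rw [piD_cons, map_mul, permHom_of, ih, List.map_cons, piD_cons]

lemma rho_evalJ (c : List (CGen n)) :
    rho (evalJ c) = ⟨piD (Phi c), (c.map wP).prod⟩ := by
  induction c with
  | nil =>
    rw [evalJ_nil, map_one]
    rfl
  | cons a t ih =>
    rw [evalJ_cons, map_mul, rho_of, ih]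
    apply SemidirectProduct.ext
    · rw [SemidirectProduct.mul_left]
      show PresentedGroup.of (genOf a) * (permAut n (wP a)) (piD (Phi t)) = piD (Phi (a :: t))
      have hact : (permAut n (wP a)) (piD (Phi t)) = permHom n (wP a) (piD (Phi t)) := rfl
      rw [hact, permHom_piD]
      rw [show Phi (a :: t) = genOf a :: (Phi t).map (permGen n (wP a)) from rfl, piD_cons]
    · show wP a * (t.map wP).prod = ((a :: t).map wP).prod
      rw [List.map_cons, List.prod_cons]

end Concrete

/-- For every `n ≥ 2` there is a well-defined group homomorphism
`ρ : J_n → D_n ⋊ S_n` with `ρ(s_{p,q}) = (τ_{[p,q]}, w_{p,q})`, and it is injective. -/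
theorem cactus_embeds_in_virtual (n : ℕ) (hn : 2 ≤ n) :
    ∃ ρ : CactusGroup n →* SemidirectProduct (GaussGroup n) (Equiv.Perm (Fin n)) (permAut n),
      (∀ (p q : ℕ) (h : (p, q) ∈ cactusSet n),
        ρ (PresentedGroup.of ⟨(p, q), h⟩) =
          ⟨PresentedGroup.of ⟨intervalFinset n p q, two_le_intervalFinset_card h⟩,
            wPerm n p q⟩) ∧
      Function.Injective ρ := by
  refine ⟨rho, ?_, ?_⟩
  · intro p q h
    exact rho_of ⟨(p, q), h⟩
  · rw [injective_iff_map_eq_one]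
    intro x hx
    obtain ⟨c, rfl⟩ := exists_word x
    rw [rho_evalJ] at hx
    have hleft : piD (Phi c) = 1 := by
      have h1 := congrArg SemidirectProduct.left hx
      simpa using h1
    obtain ⟨c', hJ, hPhi⟩ := lift_chain c [] (piD_reduce _ hleft)
    have hc' : c' = [] := by
      have h2 := Phi_length c'
      rw [hPhi] at h2
      exact List.eq_nil_of_length_eq_zero h2.symm
    rw [← hJ, hc']
    rfl
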